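/- Let Q be a compact strictly convex subset of ℝⁿ and T : ℝⁿ → ℝᵐ a linear map. The map g : T(Q) → Q sending y to the unique element of T⁻¹(y) ∩ Q of minimal Euclidean norm is a well-defined continuous section of T|_Q. -/

import Mathlib

open Set Filter Topology

/-- Uniqueness of the minimal-norm point of a convex set in an inner product space. -/
lemma min_norm_unique_aux {E : Type*} [NormedAddCommGroup E] [InnerProductSpace ℝ E]
    {K : Set E} (hK : Convex ℝ K) {a b : E} (ha : a ∈ K) (hb : b ∈ K)
    (hmin : ∀ z ∈ K, ‖a‖ ≤ ‖z‖) (hba : ‖b‖ ≤ ‖a‖) : b = a := by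
  have hm : midpoint ℝ a b ∈ K := hK.segment_subset ha hb (midpoint_mem_segment a b)
  have h1 : ‖a‖ ≤ ‖midpoint ℝ a b‖ := hmin _ hm
  have h2 : ‖midpoint ℝ a b‖ = ‖a + b‖ / 2 := by
    rw [midpoint_eq_smul_add, norm_smul]
    simp [invOf_eq_inv]
    ring
  have hpar := parallelogram_law_with_norm ℝ a b
  have h3 : ‖a - b‖ = 0 := by
    have hab : 2 * ‖a‖ ≤ ‖a + b‖ := by rw [h2] at h1; linarith
    nlinarith [norm_nonneg (a - b), norm_nonneg (a + b), norm_nonneg a, norm_nonneg b]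
  have : a - b = 0 := norm_eq_zero.mp h3
  have : a = b := by linear_combination (norm := abel) this
  exact this.symm

/-- Let `Q ⊆ ℝⁿ` be a compact strictly convex set (convex, nonempty interior, and the midpoint
of any two distinct points of `Q` lies in its interior) and `T : ℝⁿ → ℝᵐ` linear. The map `g`
sending `y ∈ T(Q)` to the unique element of `T⁻¹(y) ∩ Q` of minimal Euclidean norm is a
well-defined continuous section of `T|_Q`. -/
theorem strictlyConvex_min_euclidean_norm_section {n m : ℕ}
    (Q : Set (EuclideanSpace ℝ (Fin n)))
    (hcomp : IsCompact Q) (hconv : Convex ℝ Q)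
    (hint : (interior Q).Nonempty)
    (hsc : ∀ x ∈ Q, ∀ y ∈ Q, x ≠ y → midpoint ℝ x y ∈ interior Q)
    (T : EuclideanSpace ℝ (Fin n) →ₗ[ℝ] EuclideanSpace ℝ (Fin m)) :
    ∃ g : EuclideanSpace ℝ (Fin m) → EuclideanSpace ℝ (Fin n),
      ContinuousOn g (⇑T '' Q) ∧
      ∀ y ∈ ⇑T '' Q, g y ∈ Q ∧ T (g y) = y ∧
        (∀ z ∈ Q, T z = y → ‖g y‖ ≤ ‖z‖) ∧
        (∀ z ∈ Q, T z = y → ‖z‖ ≤ ‖g y‖ → z = g y) := by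
  classical
  have hTc : Continuous T := T.continuous_of_finiteDimensional
  -- a continuous linear right inverse of `T` on its range
  obtain ⟨S₀, hS₀⟩ := T.rangeRestrict.exists_rightInverse_of_surjective T.range_rangeRestrict
  set S : EuclideanSpace ℝ (Fin m) →ₗ[ℝ] EuclideanSpace ℝ (Fin n) :=
    S₀ ∘ₗ (Submodule.orthogonalProjection (LinearMap.range T)).toLinearMap with hSdef
  have hScont : Continuous S := S.continuous_of_finiteDimensional
  have hS : ∀ u ∈ LinearMap.range T, T (S u) = u := by
    intro u hu
    have hP : ((Submodule.orthogonalProjection (LinearMap.range T)) u : EuclideanSpace ℝ (Fin m)) = u :=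
      Submodule.starProjection_eq_self_iff.mpr hu
    have := congrArg (fun f => f ((Submodule.orthogonalProjection (LinearMap.range T)) u)) hS₀
    have h2 : T.rangeRestrict (S₀ ((Submodule.orthogonalProjection (LinearMap.range T)) u))
        = (Submodule.orthogonalProjection (LinearMap.range T)) u := this
    have h3 := congrArg (Subtype.val) h2
    simpa [hSdef, hP] using h3
  -- the fibers
  have hfibconv : ∀ y, Convex ℝ (Q ∩ T ⁻¹' {y}) := fun y =>
    hconv.inter (convex_singleton y |>.linear_preimage T)
  -- existence of minimizers
  have hex : ∀ y ∈ T '' Q, ∃ x, x ∈ Q ∧ T x = y ∧ ∀ z ∈ Q, T z = y → ‖x‖ ≤ ‖z‖ := by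
    rintro y ⟨x0, hx0, rfl⟩
    have hK : IsCompact (Q ∩ T ⁻¹' {T x0}) :=
      hcomp.inter_right (isClosed_singleton.preimage hTc)
    obtain ⟨x, hx, hxmin⟩ := hK.exists_isMinOn ⟨x0, hx0, rfl⟩
      (continuous_norm.continuousOn)
    exact ⟨x, hx.1, hx.2, fun z hz hTz => hxmin ⟨hz, hTz⟩⟩
  set g : EuclideanSpace ℝ (Fin m) → EuclideanSpace ℝ (Fin n) :=
    fun y => if h : y ∈ T '' Q then (hex y h).choose else 0 with hgdef
  have hgQ : ∀ y (h : y ∈ T '' Q), g y ∈ Q := fun y h => by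
    rw [hgdef]; simp only [dif_pos h]; exact (hex y h).choose_spec.1
  have hgT : ∀ y (h : y ∈ T '' Q), T (g y) = y := fun y h => by
    rw [hgdef]; simp only [dif_pos h]; exact (hex y h).choose_spec.2.1
  have hgmin : ∀ y (h : y ∈ T '' Q), ∀ z ∈ Q, T z = y → ‖g y‖ ≤ ‖z‖ := fun y h => by
    rw [hgdef]; simp only [dif_pos h]; exact (hex y h).choose_spec.2.2
  have huniq : ∀ y (h : y ∈ T '' Q), ∀ z ∈ Q, T z = y → ‖z‖ ≤ ‖g y‖ → z = g y := by
    intro y h z hz hTz hle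
    exact min_norm_unique_aux (hfibconv y) ⟨hgQ y h, hgT y h⟩ ⟨hz, hTz⟩
      (fun w hw => hgmin y h w hw.1 hw.2) hle
  refine ⟨g, ?_, fun y hy => ⟨hgQ y hy, hgT y hy, hgmin y hy, huniq y hy⟩⟩
  -- continuity
  intro y hy
  have hyr : y ∈ LinearMap.range T := by
    rcases hy with ⟨x, _, rfl⟩; exact ⟨x, rfl⟩
  refine tendsto_of_subseq_tendsto fun ns hns => ?_
  have hmem : ∀ᶠ k in atTop, ns k ∈ T '' Q := hns.eventually eventually_mem_nhdsWithin
  have htnd : Tendsto ns atTop (𝓝 y) := hns.mono_right nhdsWithin_le_nhds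
  obtain ⟨z, hzQ, φ, hφ, hφtend⟩ := hcomp.tendsto_subseq'
    ((hmem.mono fun k hk => hgQ _ hk).frequently)
  have hφat : Tendsto φ atTop atTop := hφ.tendsto_atTop
  have hmemφ : ∀ᶠ k in atTop, ns (φ k) ∈ T '' Q := hφat.eventually hmem
  have htndφ : Tendsto (fun k => ns (φ k)) atTop (𝓝 y) := htnd.comp hφat
  -- T z = y
  have hTz : T z = y := by
    have h1 : Tendsto (fun k => T (g (ns (φ k)))) atTop (𝓝 (T z)) :=
      (hTc.tendsto z).comp hφtend
    have h2 : Tendsto (fun k => T (g (ns (φ k)))) atTop (𝓝 y) := by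
      refine htndφ.congr' ?_
      filter_upwards [hmemφ] with k hk using (hgT _ hk).symm
    exact tendsto_nhds_unique h1 h2
  have hznorm : Tendsto (fun k => ‖g (ns (φ k))‖) atTop (𝓝 ‖z‖) :=
    (continuous_norm.tendsto z).comp hφtend
  -- z = g y
  have hz_eq : z = g y := by
    by_contra hne
    have hlt : ‖g y‖ < ‖z‖ := by
      rcases lt_or_ge ‖g y‖ ‖z‖ with h | h
      · exact h
      · exact absurd (huniq y hy z hzQ hTz h) hne
    set w := midpoint ℝ (g y) z with hwdef
    have hwint : w ∈ interior Q := hsc _ (hgQ y hy) _ hzQ (fun h => hne h.symm)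
    have hTw : T w = y := by
      rw [hwdef, midpoint_eq_smul_add, map_smul, map_add, hgT y hy, hTz,
        ← midpoint_eq_smul_add, midpoint_self]
    have hwn : ‖w‖ < ‖z‖ := by
      have : ‖w‖ ≤ (‖g y‖ + ‖z‖) / 2 := by
        rw [hwdef, midpoint_eq_smul_add, norm_smul]
        have := norm_add_le (g y) z
        simp [invOf_eq_inv]
        linarith
      linarith
    -- candidate points in the fibers over ns (φ k)
    set c : ℕ → EuclideanSpace ℝ (Fin n) := fun k => w + S (ns (φ k) - y) with hcdef
    have hctend : Tendsto c atTop (𝓝 w) := by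
      have h0 : Tendsto (fun k => ns (φ k) - y) atTop (𝓝 (y - y)) := htndφ.sub_const y
      rw [sub_self] at h0
      have h1 : Tendsto (fun k => S (ns (φ k) - y)) atTop (𝓝 (S 0)) :=
        (hScont.tendsto 0).comp h0
      rw [map_zero] at h1
      have h2 : Tendsto (fun k => w + S (ns (φ k) - y)) atTop (𝓝 (w + 0)) :=
        h1.const_add w
      rw [add_zero] at h2
      exact h2
    have hcQ : ∀ᶠ k in atTop, c k ∈ Q := by
      filter_upwards [hctend.eventually (isOpen_interior.mem_nhds hwint)] with k hk
        using interior_subset hk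
    have hcT : ∀ᶠ k in atTop, T (c k) = ns (φ k) := by
      filter_upwards [hmemφ] with k hk
      have hr : ns (φ k) - y ∈ LinearMap.range T := by
        refine Submodule.sub_mem _ ?_ hyr
        rcases hk with ⟨x, _, hxe⟩; exact ⟨x, hxe⟩
      rw [hcdef]
      simp only [map_add, hTw, hS _ hr]
      abel
    have hle : ∀ᶠ k in atTop, ‖g (ns (φ k))‖ ≤ ‖c k‖ := by
      filter_upwards [hmemφ, hcQ, hcT] with k hk hkQ hkT
      exact hgmin _ hk _ hkQ hkT
    have hcnorm : Tendsto (fun k => ‖c k‖) atTop (𝓝 ‖w‖) :=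
      (continuous_norm.tendsto w).comp hctend
    have : ‖z‖ ≤ ‖w‖ := le_of_tendsto_of_tendsto hznorm hcnorm hle
    linarith
  exact ⟨φ, hz_eq ▸ hφtend⟩
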